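/- Determinant identity for elementary off-diagonal blocks, odd case (Lemma): Let u : Fin N₁ → Γ be a weight map all of whose values are even and v : Fin N₂ → Γ a weight map all of whose values are odd, and let D_u and D_v be maps satisfying the graded-determinant axioms for u and for v (with the same linear order ≼ on Γ). Let P : Matrix (Fin N₁) (Fin N₂) A satisfy P α j ∈ 𝒜 (u α + v j) for all α, j, and let Q : Matrix (Fin N₂) (Fin N₁) A satisfy Q j α ∈ 𝒜 (v j + u α) for all j, α. If P has at most one nonzero entry, or Q has at most one nonzero entry, then 1 − P * Q is a degree-zero graded matrix for u, 1 + Q * P is a degree-zero graded matrix for v, and D_u(1 − P * Q) = D_v(1 + Q * P). -/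

import Mathlib

open Matrix

abbrev Gamma (n : ℕ) := Fin n → ZMod 2

def gpair {n : ℕ} (γ δ : Gamma n) : ZMod 2 := ∑ i, γ i * δ i

def gsign {n : ℕ} (γ δ : Gamma n) : ℤ := if gpair γ δ = 1 then -1 else 1

def GammaEven {n : ℕ} (γ : Gamma n) : Prop := gpair γ γ = 0

instance {n : ℕ} : DecidablePred (GammaEven (n := n)) := fun γ =>
  inferInstanceAs (Decidable (gpair γ γ = 0))

/-- `Γ`-graded commutativity of the graded algebra `A`:
`b * a = sign(γ,δ) • (a * b)` for homogeneous `a, b`. -/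
def GradedComm {n : ℕ} {K A : Type*} [Field K] [Ring A] [Algebra K A]
    (𝒜 : Gamma n → Submodule K A) : Prop :=
  ∀ (γ δ : Gamma n) (a b : A), a ∈ 𝒜 γ → b ∈ 𝒜 δ → b * a = gsign γ δ • (a * b)

/-- `X ∈ M^x(w)` : the matrix `X` is homogeneous of degree `x` w.r.t. the weight map `w`. -/
def Mdeg {n : ℕ} {K A : Type*} [Field K] [Ring A] [Algebra K A]
    (𝒜 : Gamma n → Submodule K A) {ι : Type*} (w : ι → Gamma n) (x : Gamma n)
    (X : Matrix ι ι A) : Prop :=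
  ∀ α β, X α β ∈ 𝒜 (w α + w β + x)

/-- `X ∈ M⁰(w)` : the matrix `X` is homogeneous of degree `0` w.r.t. the weight map `w`. -/
def Mdeg0 {n : ℕ} {K A : Type*} [Field K] [Ring A] [Algebra K A]
    (𝒜 : Gamma n → Submodule K A) {ι : Type*} (w : ι → Gamma n)
    (X : Matrix ι ι A) : Prop :=
  ∀ α β, X α β ∈ 𝒜 (w α + w β)

/-- Leibniz determinant over a (not necessarily commutative) ring, with the product
taken in the order given by the linear order on the index type. -/
def listDet {ι : Type*} [Fintype ι] [LinearOrder ι] {A : Type*} [Ring A]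
    (X : Matrix ι ι A) : A :=
  ∑ σ : Equiv.Perm ι, (Equiv.Perm.sign σ : ℤ) •
    ((Finset.sort Finset.univ (· ≤ ·)).map fun i => X (σ i) i).prod

/-- The product over the values `γ` in the range of `v` (ordered by `lo`) of the ordinary
determinants of the diagonal blocks `{α | v α = γ}` of `X`. -/
def detProd {n : ℕ} (lo : LinearOrder (Gamma n)) {ι : Type*} [Fintype ι] [LinearOrder ι]
    {A : Type*} [Ring A] (v : ι → Gamma n) (X : Matrix ι ι A) : A :=
  letI : LinearOrder (Gamma n) := lo
  ((Finset.sort (Finset.image v Finset.univ) (· ≤ ·)).map fun γ =>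
    listDet (Matrix.of fun a b : {α : ι // v α = γ} => X a.1 b.1)).prod

/-- The graded-determinant axioms for a map `D` on degree-zero graded matrices with weight
map `v` and a fixed linear order `lo` on `Γ`: `D` is valued in `𝒜 0`, is multiplicative,
equals the product of the ordinary block determinants on block-diagonal matrices, and
equals `1` on block-unitriangular matrices. -/
def DetAxioms {n : ℕ} {K A : Type*} [Field K] [Ring A] [Algebra K A]
    (𝒜 : Gamma n → Submodule K A) (lo : LinearOrder (Gamma n))
    {ι : Type*} [Fintype ι] [LinearOrder ι] (v : ι → Gamma n)
    (D : Matrix ι ι A → A) : Prop :=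
  (∀ X, Mdeg0 𝒜 v X → D X ∈ 𝒜 0) ∧
  (∀ X Y, Mdeg0 𝒜 v X → Mdeg0 𝒜 v Y → D (X * Y) = D X * D Y) ∧
  (∀ X, Mdeg0 𝒜 v X → (∀ α β, v α ≠ v β → X α β = 0) → D X = detProd lo v X) ∧
  (∀ X, Mdeg0 𝒜 v X → (∀ α β, v α = v β → X α β = if α = β then (1 : A) else 0) →
    ((∀ α β, lo.lt (v α) (v β) → X α β = 0) ∨ (∀ α β, lo.lt (v β) (v α) → X α β = 0)) →
    D X = 1)

/-- A matrix is elementary if it has at most one nonzero entry. -/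
def Elementary {ι κ A : Type*} [Zero A] (P : Matrix ι κ A) : Prop :=
  ∀ α j α' j', P α j ≠ 0 → P α' j' ≠ 0 → α = α' ∧ j = j'


namespace GDaux

lemma gadd_self {n : ℕ} (γ : Gamma n) : γ + γ = 0 := by
  funext i; exact (by decide : ∀ a : ZMod 2, a + a = 0) _

lemma gadd_cancel {n : ℕ} (γ δ ε : Gamma n) : (γ + δ) + (δ + ε) = γ + ε := by
  funext i; exact (by decide : ∀ a b c : ZMod 2, (a+b)+(b+c) = a+c) _ _ _

lemma gpair_add {n : ℕ} (γ δ : Gamma n) :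
    gpair (γ + δ) (γ + δ) = gpair γ γ + gpair δ δ := by
  unfold gpair
  rw [← Finset.sum_add_distrib]
  exact Finset.sum_congr rfl fun i _ =>
    (by decide : ∀ a b : ZMod 2, (a+b)*(a+b) = a*a + b*b) _ _

lemma zmod2_ne_zero {x : ZMod 2} (h : x ≠ 0) : x = 1 := by revert h; revert x; decide

lemma gpair_mixed {n : ℕ} {γ δ : Gamma n} (h1 : GammaEven γ) (h2 : ¬ GammaEven δ) :
    gpair (γ + δ) (γ + δ) = 1 := by
  rw [gpair_add, h1, zero_add]
  exact zmod2_ne_zero h2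

lemma anticomm {n : ℕ} {K A : Type*} [Field K] [Ring A] [Algebra K A]
    {𝒜 : Gamma n → Submodule K A} (hcomm : GradedComm 𝒜) {γ δ : Gamma n} {a b : A}
    (ha : a ∈ 𝒜 γ) (hb : b ∈ 𝒜 δ) (hodd : gpair γ δ = 1) : b * a = -(a * b) := by
  rw [hcomm γ δ a b ha hb, gsign, if_pos hodd, neg_smul, one_smul]

lemma sq_zero {n : ℕ} {K A : Type*} [Field K] [CharZero K] [Ring A] [Algebra K A]
    {𝒜 : Gamma n → Submodule K A} (hcomm : GradedComm 𝒜) {γ : Gamma n} {a : A}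
    (ha : a ∈ 𝒜 γ) (hodd : gpair γ γ = 1) : a * a = 0 := by
  have h := anticomm hcomm ha ha hodd
  have h2 : (2 : K) • (a * a) = 0 := by
    rw [two_smul]
    nth_rewrite 2 [h]
    exact add_neg_cancel _
  calc a * a = (2 : K)⁻¹ • ((2 : K) • (a * a)) := by
        rw [smul_smul, inv_mul_cancel₀ (by norm_num : (2:K) ≠ 0), one_smul]
    _ = 0 := by rw [h2, smul_zero]

lemma cross_zero {A : Type*} [Ring A] (p x y : A) (s : ℤ) (h1 : x * p = s • (p * x))
    (hpp : p * p = 0) : (p * x) * (p * y) = 0 := by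
  have h : (p * x) * (p * y) = p * (x * p) * y := by
    rw [mul_assoc p x (p*y), ← mul_assoc x p y, mul_assoc p (x*p) y]
  rw [h, h1, mul_smul_comm, smul_mul_assoc, ← mul_assoc p p x, hpp, zero_mul, zero_mul,
    smul_zero]

lemma cross_zero' {A : Type*} [Ring A] (p x y : A) (s : ℤ) (h1 : p * y = s • (y * p))
    (hpp : p * p = 0) : (x * p) * (y * p) = 0 := by
  have h : (x * p) * (y * p) = x * (p * y) * p := by
    rw [mul_assoc x p (y*p), ← mul_assoc p y p, mul_assoc x (p*y) p]
  rw [h, h1, mul_smul_comm, smul_mul_assoc, mul_assoc x (y*p) p, mul_assoc y p p, hpp,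
    mul_zero, mul_zero, smul_zero]

lemma list_prod_eq_of_single {M ι : Type*} [Monoid M] (f : ι → M) (a : ι) :
    ∀ (l : List ι), a ∈ l → l.Nodup → (∀ b ∈ l, b ≠ a → f b = 1) → (l.map f).prod = f a
  | [], h, _, _ => by simp at h
  | b :: t, h, hnd, h1 => by
    rcases List.mem_cons.mp h with rfl | ha
    · simp only [List.map_cons, List.prod_cons]
      have hall : ∀ x ∈ t.map f, x = 1 := by
        intro x hx
        obtain ⟨y, hy, rfl⟩ := List.mem_map.mp hx
        exact h1 y (List.mem_cons_of_mem _ hy)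
          (fun hya => (List.nodup_cons.mp hnd).1 (hya ▸ hy))
      rw [List.prod_eq_one hall, mul_one]
    · simp only [List.map_cons, List.prod_cons]
      rw [h1 b (List.mem_cons_self)
          (fun hba => (List.nodup_cons.mp hnd).1 (hba ▸ ha)), one_mul,
        list_prod_eq_of_single f a t ha (List.nodup_cons.mp hnd).2
          (fun x hx hxa => h1 x (List.mem_cons_of_mem _ hx) hxa)]
lemma listDet_row {ι : Type*} [Fintype ι] [LinearOrder ι] {A : Type*} [Ring A]
    (X : Matrix ι ι A) (a₀ : ι) (h : ∀ β γ, β ≠ a₀ → X β γ = if β = γ then 1 else 0) :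
    listDet X = X a₀ a₀ := by
  unfold listDet
  rw [Finset.sum_eq_single (1 : Equiv.Perm ι)]
  · simp only [Equiv.Perm.sign_one, Units.val_one, one_smul, Equiv.Perm.one_apply]
    exact list_prod_eq_of_single _ a₀ _ ((Finset.mem_sort _).2 (Finset.mem_univ _))
      (Finset.sort_nodup _ _)
      (fun b _ hb => by rw [h b b hb, if_pos rfl])
  · intro σ _ hσ
    have : ∃ i, σ i ≠ i := by
      by_contra hh
      push_neg at hh
      exact hσ (Equiv.ext hh)
    obtain ⟨i, hi⟩ := this
    have hz : ∃ j, X (σ j) j = 0 := by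
      by_cases hia : σ i = a₀
      · refine ⟨a₀, ?_⟩
        have hσa : σ a₀ ≠ a₀ := fun hc => hi ((σ.injective (hc.trans hia.symm)) ▸ hia)
        rw [h _ _ hσa, if_neg hσa]
      · exact ⟨i, by rw [h _ _ hia, if_neg hi]⟩
    obtain ⟨j, hj⟩ := hz
    rw [List.prod_eq_zero, smul_zero]
    exact List.mem_map.mpr ⟨j, (Finset.mem_sort _).2 (Finset.mem_univ _), hj⟩
  · intro h1; exact absurd (Finset.mem_univ _) h1

lemma listDet_col {ι : Type*} [Fintype ι] [LinearOrder ι] {A : Type*} [Ring A]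
    (X : Matrix ι ι A) (a₀ : ι) (h : ∀ β γ, γ ≠ a₀ → X β γ = if β = γ then 1 else 0) :
    listDet X = X a₀ a₀ := by
  unfold listDet
  rw [Finset.sum_eq_single (1 : Equiv.Perm ι)]
  · simp only [Equiv.Perm.sign_one, Units.val_one, one_smul, Equiv.Perm.one_apply]
    exact list_prod_eq_of_single _ a₀ _ ((Finset.mem_sort _).2 (Finset.mem_univ _))
      (Finset.sort_nodup _ _)
      (fun b _ hb => by rw [h b b hb, if_pos rfl])
  · intro σ _ hσ
    have : ∃ i, σ i ≠ i := by
      by_contra hh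
      push_neg at hh
      exact hσ (Equiv.ext hh)
    obtain ⟨i, hi⟩ := this
    have hz : ∃ j, X (σ j) j = 0 := by
      by_cases hia : i = a₀
      · subst hia
        refine ⟨σ i, ?_⟩
        have h1 : σ i ≠ i := hi
        have h2 : σ (σ i) ≠ σ i := fun hc => h1 (σ.injective hc)
        rw [h _ _ h1, if_neg h2]
      · exact ⟨i, by rw [h _ _ hia, if_neg hi]⟩
    obtain ⟨j, hj⟩ := hz
    rw [List.prod_eq_zero, smul_zero]
    exact List.mem_map.mpr ⟨j, (Finset.mem_sort _).2 (Finset.mem_univ _), hj⟩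
  · intro h1; exact absurd (Finset.mem_univ _) h1
lemma detProd_row {n : ℕ} (lo : LinearOrder (Gamma n)) {ι : Type*} [Fintype ι] [LinearOrder ι]
    {A : Type*} [Ring A] (w : ι → Gamma n) (X : Matrix ι ι A) (α₀ : ι)
    (h : ∀ β γ, β ≠ α₀ → X β γ = if β = γ then 1 else 0) :
    detProd lo w X = X α₀ α₀ := by
  letI : LinearOrder (Gamma n) := lo
  unfold detProd
  have hmem : w α₀ ∈ Finset.sort (Finset.image w Finset.univ) (· ≤ ·) :=
    (Finset.mem_sort _).2 (Finset.mem_image.2 ⟨α₀, Finset.mem_univ _, rfl⟩)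
  rw [list_prod_eq_of_single _ (w α₀) _ hmem (Finset.sort_nodup _ _) ?h1]
  · exact (listDet_row _ (⟨α₀, rfl⟩ : {α : ι // w α = w α₀})
      (fun b c hb => by
        rw [Matrix.of_apply, h b.1 c.1 (fun hc => hb (Subtype.ext hc))]
        simp [Subtype.ext_iff])).trans (by simp [h])
  case h1 =>
    intro γ₀ hγ₀ hne
    obtain ⟨β₀, _, hβ₀⟩ := Finset.mem_image.mp ((Finset.mem_sort _).1 hγ₀)
    rw [listDet_row _ (⟨β₀, hβ₀⟩ : {α : ι // w α = γ₀})
      (fun b c _ => by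
        rw [Matrix.of_apply, h b.1 c.1 (fun hc => hne (b.2.symm.trans (congrArg w hc)))]
        simp [Subtype.ext_iff])]
    have : (⟨β₀, hβ₀⟩ : {α : ι // w α = γ₀}).1 ≠ α₀ := fun hc => hne (hβ₀.symm.trans (congrArg w hc))
    rw [Matrix.of_apply, h _ _ this, if_pos rfl]

lemma detProd_col {n : ℕ} (lo : LinearOrder (Gamma n)) {ι : Type*} [Fintype ι] [LinearOrder ι]
    {A : Type*} [Ring A] (w : ι → Gamma n) (X : Matrix ι ι A) (α₀ : ι)
    (h : ∀ β γ, γ ≠ α₀ → X β γ = if β = γ then 1 else 0) :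
    detProd lo w X = X α₀ α₀ := by
  letI : LinearOrder (Gamma n) := lo
  unfold detProd
  have hmem : w α₀ ∈ Finset.sort (Finset.image w Finset.univ) (· ≤ ·) :=
    (Finset.mem_sort _).2 (Finset.mem_image.2 ⟨α₀, Finset.mem_univ _, rfl⟩)
  rw [list_prod_eq_of_single _ (w α₀) _ hmem (Finset.sort_nodup _ _) ?h1]
  · exact (listDet_col _ (⟨α₀, rfl⟩ : {α : ι // w α = w α₀})
      (fun b c hb => by
        rw [Matrix.of_apply, h b.1 c.1 (fun hc => hb (Subtype.ext hc))]
        simp [Subtype.ext_iff])).trans (by simp [h])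
  case h1 =>
    intro γ₀ hγ₀ hne
    obtain ⟨β₀, _, hβ₀⟩ := Finset.mem_image.mp ((Finset.mem_sort _).1 hγ₀)
    rw [listDet_col _ (⟨β₀, hβ₀⟩ : {α : ι // w α = γ₀})
      (fun b c _ => by
        rw [Matrix.of_apply, h b.1 c.1 (fun hc => hne (c.2.symm.trans (congrArg w hc)))]
        simp [Subtype.ext_iff])]
    have : (⟨β₀, hβ₀⟩ : {α : ι // w α = γ₀}).1 ≠ α₀ := fun hc => hne (hβ₀.symm.trans (congrArg w hc))
    rw [Matrix.of_apply, h _ _ this, if_pos rfl]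
variable {n : ℕ} {K A : Type*} [Field K] [Ring A] [Algebra K A]
  (𝒜 : Gamma n → Submodule K A) [GradedRing 𝒜]
  {ι : Type*} [Fintype ι] [LinearOrder ι] (w : ι → Gamma n)

def Rrow (α₀ : ι) (c : ι → A) : Matrix ι ι A :=
  Matrix.of fun β γ => (if β = γ then (1:A) else 0) + (if β = α₀ then c γ else 0)

def Rcol (α₀ : ι) (c : ι → A) : Matrix ι ι A :=
  Matrix.of fun β γ => (if β = γ then (1:A) else 0) + (if γ = α₀ then c β else 0)

lemma Rrow_mdeg0 (α₀ : ι) (c : ι → A) (hc : ∀ γ, c γ ∈ 𝒜 (w α₀ + w γ)) :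
    Mdeg0 𝒜 w (Rrow α₀ c) := by
  intro β γ
  apply Submodule.add_mem
  · by_cases h : β = γ
    · subst h
      rw [if_pos rfl, gadd_self]
      exact SetLike.one_mem_graded 𝒜
    · rw [if_neg h]; exact Submodule.zero_mem _
  · by_cases h : β = α₀
    · subst h; rw [if_pos rfl]; exact hc γ
    · rw [if_neg h]; exact Submodule.zero_mem _

lemma Rcol_mdeg0 (α₀ : ι) (c : ι → A) (hc : ∀ β, c β ∈ 𝒜 (w β + w α₀)) :
    Mdeg0 𝒜 w (Rcol α₀ c) := by
  intro β γ
  apply Submodule.add_mem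
  · by_cases h : β = γ
    · subst h
      rw [if_pos rfl, gadd_self]
      exact SetLike.one_mem_graded 𝒜
    · rw [if_neg h]; exact Submodule.zero_mem _
  · by_cases h : γ = α₀
    · subst h; rw [if_pos rfl]; exact hc β
    · rw [if_neg h]; exact Submodule.zero_mem _

lemma Rrow_mul (α₀ : ι) (c c' : ι → A) (h : ∀ γ, c α₀ * c' γ = 0) :
    Rrow (A := A) α₀ c * Rrow α₀ c' = Rrow α₀ (c + c') := by
  ext β γ
  simp only [Rrow, Matrix.mul_apply, Matrix.of_apply, add_mul, mul_add, ite_mul, mul_ite,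
    one_mul, mul_one, zero_mul, mul_zero, Finset.sum_add_distrib, Pi.add_apply]
  by_cases hβ : β = α₀ <;>
    simp [hβ, h, Finset.sum_ite_eq, Finset.sum_ite_eq'] <;> abel

lemma Rcol_mul (α₀ : ι) (c c' : ι → A) (h : ∀ β, c β * c' α₀ = 0) :
    Rcol (A := A) α₀ c * Rcol α₀ c' = Rcol α₀ (c + c') := by
  ext β γ
  simp only [Rcol, Matrix.mul_apply, Matrix.of_apply, add_mul, mul_add, ite_mul, mul_ite,
    one_mul, mul_one, zero_mul, mul_zero, Finset.sum_add_distrib, Pi.add_apply]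
  by_cases hγ : γ = α₀ <;>
    simp [hγ, h, Finset.sum_ite_eq, Finset.sum_ite_eq', Finset.sum_add_distrib] <;> abel

variable (lo : LinearOrder (Gamma n)) (D : Matrix ι ι A → A)

lemma D_Rrow_tri (hD : DetAxioms 𝒜 lo w D) (α₀ : ι) (c : ι → A)
    (hdeg : ∀ γ, c γ ∈ 𝒜 (w α₀ + w γ))
    (hsupp : (∀ γ, c γ ≠ 0 → lo.lt (w γ) (w α₀)) ∨ (∀ γ, c γ ≠ 0 → lo.lt (w α₀) (w γ))) :
    D (Rrow α₀ c) = 1 := by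
  letI : LinearOrder (Gamma n) := lo
  apply hD.2.2.2 _ (Rrow_mdeg0 𝒜 w α₀ c hdeg)
  · intro β γ hw
    simp only [Rrow, Matrix.of_apply]
    have hc : (if β = α₀ then c γ else 0) = 0 := by
      split
      · next hβ =>
        subst hβ
        by_contra h
        rcases hsupp with hs | hs
        · exact absurd hw.symm (ne_of_lt (hs γ h))
        · exact absurd hw (ne_of_lt (hs γ h))
      · rfl
    rw [hc, add_zero]
  · rcases hsupp with hs | hs
    · left
      intro α β hlt
      simp only [Rrow, Matrix.of_apply]
      have h1 : α ≠ β := fun hc => absurd (congrArg w hc) (ne_of_lt hlt)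
      rw [if_neg h1]
      have h2 : (if α = α₀ then c β else 0) = 0 := by
        split
        · next hβ =>
          subst hβ
          by_contra h
          exact absurd hlt (not_lt_of_gt (hs β h))
        · rfl
      rw [h2, add_zero]
    · right
      intro α β hlt
      simp only [Rrow, Matrix.of_apply]
      have h1 : α ≠ β := fun hc => absurd (congrArg w hc).symm (ne_of_lt hlt)
      rw [if_neg h1]
      have h2 : (if α = α₀ then c β else 0) = 0 := by
        split
        · next hβ =>
          subst hβ
          by_contra h
          exact absurd hlt (not_lt_of_gt (hs β h))
        · rfl
      rw [h2, add_zero]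

lemma D_Rcol_tri (hD : DetAxioms 𝒜 lo w D) (α₀ : ι) (c : ι → A)
    (hdeg : ∀ β, c β ∈ 𝒜 (w β + w α₀))
    (hsupp : (∀ β, c β ≠ 0 → lo.lt (w β) (w α₀)) ∨ (∀ β, c β ≠ 0 → lo.lt (w α₀) (w β))) :
    D (Rcol α₀ c) = 1 := by
  letI : LinearOrder (Gamma n) := lo
  apply hD.2.2.2 _ (Rcol_mdeg0 𝒜 w α₀ c hdeg)
  · intro β γ hw
    simp only [Rcol, Matrix.of_apply]
    have hc : (if γ = α₀ then c β else 0) = 0 := by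
      split
      · next hγ =>
        subst hγ
        by_contra h
        rcases hsupp with hs | hs
        · exact absurd hw (ne_of_lt (hs β h))
        · exact absurd hw.symm (ne_of_lt (hs β h))
      · rfl
    rw [hc, add_zero]
  · rcases hsupp with hs | hs
    · right
      intro α β hlt
      simp only [Rcol, Matrix.of_apply]
      have h1 : α ≠ β := fun hc => absurd (congrArg w hc).symm (ne_of_lt hlt)
      rw [if_neg h1]
      have h2 : (if β = α₀ then c α else 0) = 0 := by
        split
        · next hβ =>
          subst hβ
          by_contra h
          exact absurd hlt (not_lt_of_gt (hs α h))
        · rfl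
      rw [h2, add_zero]
    · left
      intro α β hlt
      simp only [Rcol, Matrix.of_apply]
      have h1 : α ≠ β := fun hc => absurd (congrArg w hc) (ne_of_lt hlt)
      rw [if_neg h1]
      have h2 : (if β = α₀ then c α else 0) = 0 := by
        split
        · next hβ =>
          subst hβ
          by_contra h
          exact absurd hlt (not_lt_of_gt (hs α h))
        · rfl
      rw [h2, add_zero]

lemma D_Rrow_blk (hD : DetAxioms 𝒜 lo w D) (α₀ : ι) (c : ι → A)
    (hdeg : ∀ γ, c γ ∈ 𝒜 (w α₀ + w γ))
    (hsupp : ∀ γ, c γ ≠ 0 → w γ = w α₀) :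
    D (Rrow α₀ c) = 1 + c α₀ := by
  rw [hD.2.2.1 _ (Rrow_mdeg0 𝒜 w α₀ c hdeg) ?_,
    detProd_row lo w _ α₀ ?_]
  · simp [Rrow]
  · intro β γ hβ
    simp [Rrow, hβ]
  · intro β γ hw
    simp only [Rrow, Matrix.of_apply]
    have h1 : β ≠ γ := fun hc => hw (congrArg w hc)
    rw [if_neg h1]
    have h2 : (if β = α₀ then c γ else 0) = 0 := by
      split
      · next hβ =>
        subst hβ
        by_contra h
        exact hw ((hsupp γ h).symm)
      · rfl
    rw [h2, add_zero]

lemma D_Rcol_blk (hD : DetAxioms 𝒜 lo w D) (α₀ : ι) (c : ι → A)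
    (hdeg : ∀ β, c β ∈ 𝒜 (w β + w α₀))
    (hsupp : ∀ β, c β ≠ 0 → w β = w α₀) :
    D (Rcol α₀ c) = 1 + c α₀ := by
  rw [hD.2.2.1 _ (Rcol_mdeg0 𝒜 w α₀ c hdeg) ?_,
    detProd_col lo w _ α₀ ?_]
  · simp [Rcol]
  · intro β γ hγ
    simp [Rcol, hγ]
  · intro β γ hw
    simp only [Rcol, Matrix.of_apply]
    have h1 : β ≠ γ := fun hc => hw (congrArg w hc)
    rw [if_neg h1]
    have h2 : (if γ = α₀ then c β else 0) = 0 := by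
      split
      · next hγ =>
        subst hγ
        by_contra h
        exact hw ((hsupp β h))
      · rfl
    rw [h2, add_zero]

lemma D_Rrow (hD : DetAxioms 𝒜 lo w D) (α₀ : ι) (c : ι → A)
    (hdeg : ∀ γ, c γ ∈ 𝒜 (w α₀ + w γ)) (hzero : ∀ γ δ, c γ * c δ = 0) :
    D (Rrow α₀ c) = 1 + c α₀ := by
  classical
  letI : LinearOrder (Gamma n) := lo
  set cl : ι → A := fun γ => if w γ < w α₀ then c γ else 0 with hcl
  set cm : ι → A := fun γ => if w γ = w α₀ then c γ else 0 with hcm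
  set cg : ι → A := fun γ => if w α₀ < w γ then c γ else 0 with hcg
  have hdl : ∀ γ, cl γ ∈ 𝒜 (w α₀ + w γ) := by
    intro γ; simp only [hcl]; split
    · exact hdeg γ
    · exact Submodule.zero_mem _
  have hdm : ∀ γ, cm γ ∈ 𝒜 (w α₀ + w γ) := by
    intro γ; simp only [hcm]; split
    · exact hdeg γ
    · exact Submodule.zero_mem _
  have hdg : ∀ γ, cg γ ∈ 𝒜 (w α₀ + w γ) := by
    intro γ; simp only [hcg]; split
    · exact hdeg γ
    · exact Submodule.zero_mem _
  have hdmg : ∀ γ, (cm + cg) γ ∈ 𝒜 (w α₀ + w γ) := fun γ =>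
    Submodule.add_mem _ (hdm γ) (hdg γ)
  have hz1 : ∀ γ, cm α₀ * cg γ = 0 := by
    intro γ; simp only [hcm, hcg]
    split <;> split <;> simp [hzero]
  have hz2 : ∀ γ, cl α₀ * (cm + cg) γ = 0 := by
    intro γ
    simp only [Pi.add_apply, mul_add, hcl, hcm, hcg]
    split <;> split <;> split <;> simp [hzero]
  have e1 : Rrow (A := A) α₀ cm * Rrow α₀ cg = Rrow α₀ (cm + cg) := Rrow_mul α₀ cm cg hz1
  have e2 : Rrow (A := A) α₀ cl * Rrow α₀ (cm + cg) = Rrow α₀ (cl + (cm + cg)) :=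
    Rrow_mul α₀ cl (cm + cg) hz2
  have hdecomp : cl + (cm + cg) = c := by
    funext γ
    simp only [Pi.add_apply, hcl, hcm, hcg]
    rcases lt_trichotomy (w γ) (w α₀) with h | h | h
    · rw [if_pos h, if_neg (ne_of_lt h), if_neg (not_lt_of_gt h), add_zero, add_zero]
    · rw [if_neg (by rw [h]; exact lt_irrefl _), if_pos h, if_neg (by rw [h]; exact lt_irrefl _),
        add_zero, zero_add]
    · rw [if_neg (not_lt_of_gt h), if_neg (ne_of_gt h), if_pos h, zero_add, zero_add]
  have key : D (Rrow α₀ c) = D (Rrow α₀ cl) * (D (Rrow α₀ cm) * D (Rrow α₀ cg)) := by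
    rw [← hdecomp, ← e2, hD.2.1 _ _ (Rrow_mdeg0 𝒜 w α₀ cl hdl) (Rrow_mdeg0 𝒜 w α₀ _ hdmg),
      ← e1, hD.2.1 _ _ (Rrow_mdeg0 𝒜 w α₀ cm hdm) (Rrow_mdeg0 𝒜 w α₀ cg hdg)]
  rw [key, D_Rrow_tri 𝒜 w lo D hD α₀ cl hdl ?_, D_Rrow_blk 𝒜 w lo D hD α₀ cm hdm ?_,
    D_Rrow_tri 𝒜 w lo D hD α₀ cg hdg ?_, one_mul, mul_one]
  · simp only [hcm, if_pos rfl]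
  · right
    intro γ hγ
    simp only [hcg] at hγ
    by_contra h
    rw [if_neg h] at hγ
    exact hγ rfl
  · intro γ hγ
    simp only [hcm] at hγ
    by_contra h
    rw [if_neg h] at hγ
    exact hγ rfl
  · left
    intro γ hγ
    simp only [hcl] at hγ
    by_contra h
    rw [if_neg h] at hγ
    exact hγ rfl

lemma D_Rcol (hD : DetAxioms 𝒜 lo w D) (α₀ : ι) (c : ι → A)
    (hdeg : ∀ β, c β ∈ 𝒜 (w β + w α₀)) (hzero : ∀ γ δ, c γ * c δ = 0) :
    D (Rcol α₀ c) = 1 + c α₀ := by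
  classical
  letI : LinearOrder (Gamma n) := lo
  set cl : ι → A := fun γ => if w γ < w α₀ then c γ else 0 with hcl
  set cm : ι → A := fun γ => if w γ = w α₀ then c γ else 0 with hcm
  set cg : ι → A := fun γ => if w α₀ < w γ then c γ else 0 with hcg
  have hdl : ∀ γ, cl γ ∈ 𝒜 (w γ + w α₀) := by
    intro γ; simp only [hcl]; split
    · exact hdeg γ
    · exact Submodule.zero_mem _
  have hdm : ∀ γ, cm γ ∈ 𝒜 (w γ + w α₀) := by
    intro γ; simp only [hcm]; split
    · exact hdeg γ
    · exact Submodule.zero_mem _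
  have hdg : ∀ γ, cg γ ∈ 𝒜 (w γ + w α₀) := by
    intro γ; simp only [hcg]; split
    · exact hdeg γ
    · exact Submodule.zero_mem _
  have hdmg : ∀ γ, (cm + cg) γ ∈ 𝒜 (w γ + w α₀) := fun γ =>
    Submodule.add_mem _ (hdm γ) (hdg γ)
  have hz1 : ∀ γ, cm γ * cg α₀ = 0 := by
    intro γ; simp only [hcm, hcg]
    split <;> split <;> simp [hzero]
  have hz2 : ∀ γ, cl γ * (cm + cg) α₀ = 0 := by
    intro γ
    simp only [Pi.add_apply, mul_add, hcl, hcm, hcg]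
    split <;> split <;> split <;> simp [hzero]
  have e1 : Rcol (A := A) α₀ cm * Rcol α₀ cg = Rcol α₀ (cm + cg) := Rcol_mul α₀ cm cg hz1
  have e2 : Rcol (A := A) α₀ cl * Rcol α₀ (cm + cg) = Rcol α₀ (cl + (cm + cg)) :=
    Rcol_mul α₀ cl (cm + cg) hz2
  have hdecomp : cl + (cm + cg) = c := by
    funext γ
    simp only [Pi.add_apply, hcl, hcm, hcg]
    rcases lt_trichotomy (w γ) (w α₀) with h | h | h
    · rw [if_pos h, if_neg (ne_of_lt h), if_neg (not_lt_of_gt h), add_zero, add_zero]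
    · rw [if_neg (by rw [h]; exact lt_irrefl _), if_pos h, if_neg (by rw [h]; exact lt_irrefl _),
        add_zero, zero_add]
    · rw [if_neg (not_lt_of_gt h), if_neg (ne_of_gt h), if_pos h, zero_add, zero_add]
  have key : D (Rcol α₀ c) = D (Rcol α₀ cl) * (D (Rcol α₀ cm) * D (Rcol α₀ cg)) := by
    rw [← hdecomp, ← e2, hD.2.1 _ _ (Rcol_mdeg0 𝒜 w α₀ cl hdl) (Rcol_mdeg0 𝒜 w α₀ _ hdmg),
      ← e1, hD.2.1 _ _ (Rcol_mdeg0 𝒜 w α₀ cm hdm) (Rcol_mdeg0 𝒜 w α₀ cg hdg)]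
  rw [key, D_Rcol_tri 𝒜 w lo D hD α₀ cl hdl ?_, D_Rcol_blk 𝒜 w lo D hD α₀ cm hdm ?_,
    D_Rcol_tri 𝒜 w lo D hD α₀ cg hdg ?_, one_mul, mul_one]
  · simp only [hcm, if_pos rfl]
  · right
    intro γ hγ
    simp only [hcg] at hγ
    by_contra h
    rw [if_neg h] at hγ
    exact hγ rfl
  · intro γ hγ
    simp only [hcm] at hγ
    by_contra h
    rw [if_neg h] at hγ
    exact hγ rfl
  · left
    intro γ hγ
    simp only [hcl] at hγ
    by_contra h
    rw [if_neg h] at hγ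
    exact hγ rfl


lemma D_one [DecidableEq ι] (hD : DetAxioms 𝒜 lo w D) :
    Mdeg0 𝒜 w (1 : Matrix ι ι A) ∧ D 1 = 1 := by
  letI : LinearOrder (Gamma n) := lo
  have hm : Mdeg0 𝒜 w (1 : Matrix ι ι A) := by
    intro α β
    rw [Matrix.one_apply]
    split
    · next h => subst h; rw [gadd_self]; exact SetLike.one_mem_graded 𝒜
    · exact Submodule.zero_mem _
  refine ⟨hm, hD.2.2.2 _ hm (fun α β _ => by by_cases h : α = β <;> simp [h, Matrix.one_apply]) ?_⟩
  left
  intro α β hlt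
  exact Matrix.one_apply_ne (fun hc => absurd (congrArg w hc) (ne_of_lt hlt))

end GDaux

/-- **Determinant identity for elementary off-diagonal blocks, odd case** (Lemma).
With `u` even-valued, `v` odd-valued weight maps and `P`, `Q` graded rectangular blocks
one of which is elementary, `1 − P Q` and `1 + Q P` are degree-zero graded matrices and
`D_u(1 − P Q) = D_v(1 + Q P)`. -/
theorem graded_det_elementary_odd {n N₁ N₂ : ℕ} (hn : 1 ≤ n) (hN₁ : 1 ≤ N₁) (hN₂ : 1 ≤ N₂)
    {K A : Type*} [Field K] [CharZero K] [Ring A] [Algebra K A]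
    (𝒜 : Gamma n → Submodule K A) [GradedAlgebra 𝒜] (hcomm : GradedComm 𝒜)
    (u : Fin N₁ → Gamma n) (hu : ∀ α, GammaEven (u α))
    (v : Fin N₂ → Gamma n) (hv : ∀ j, ¬ GammaEven (v j))
    (lo : LinearOrder (Gamma n))
    (Du : Matrix (Fin N₁) (Fin N₁) A → A) (hDu : DetAxioms 𝒜 lo u Du)
    (Dv : Matrix (Fin N₂) (Fin N₂) A → A) (hDv : DetAxioms 𝒜 lo v Dv)
    (P : Matrix (Fin N₁) (Fin N₂) A) (hP : ∀ α j, P α j ∈ 𝒜 (u α + v j))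
    (Q : Matrix (Fin N₂) (Fin N₁) A) (hQ : ∀ j α, Q j α ∈ 𝒜 (v j + u α))
    (hel : Elementary P ∨ Elementary Q) :
    Mdeg0 𝒜 u (1 - P * Q) ∧ Mdeg0 𝒜 v (1 + Q * P) ∧
      Du (1 - P * Q) = Dv (1 + Q * P) := by
  classical
  rcases hel with hP' | hQ'
  · by_cases hP0 : P = 0
    · have hPQ : P * Q = 0 := by rw [hP0, Matrix.zero_mul]
      have hQP : Q * P = 0 := by rw [hP0, Matrix.mul_zero]
      rw [hPQ, hQP, sub_zero, add_zero]
      exact ⟨(GDaux.D_one 𝒜 u lo Du hDu).1, (GDaux.D_one 𝒜 v lo Dv hDv).1,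
        by rw [(GDaux.D_one 𝒜 u lo Du hDu).2, (GDaux.D_one 𝒜 v lo Dv hDv).2]⟩
    · obtain ⟨α₀, j₀, hp⟩ : ∃ α j, P α j ≠ 0 := by
        by_contra h
        push_neg at h
        exact hP0 (by ext α j; exact h α j)
      have hPz : ∀ α j, α ≠ α₀ ∨ j ≠ j₀ → P α j = 0 := by
        intro α j hne
        by_contra h
        obtain ⟨h1, h2⟩ := hP' α j α₀ j₀ h hp
        rcases hne with hne | hne
        · exact hne h1
        · exact hne h2
      have hodd : gpair (u α₀ + v j₀) (u α₀ + v j₀) = 1 :=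
        GDaux.gpair_mixed (hu α₀) (hv j₀)
      have hodd2 : gpair (u α₀ + v j₀) (v j₀ + u α₀) = 1 := by
        rw [add_comm (v j₀) (u α₀)]; exact hodd
      have hpp : P α₀ j₀ * P α₀ j₀ = 0 := GDaux.sq_zero hcomm (hP α₀ j₀) hodd
      have hdeg1 : ∀ γ, -(P α₀ j₀ * Q j₀ γ) ∈ 𝒜 (u α₀ + u γ) := by
        intro γ
        have h := SetLike.mul_mem_graded (hP α₀ j₀) (hQ j₀ γ)
        rw [GDaux.gadd_cancel] at h
        exact Submodule.neg_mem _ h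
      have hdeg2 : ∀ β, Q β α₀ * P α₀ j₀ ∈ 𝒜 (v β + v j₀) := by
        intro β
        have h := SetLike.mul_mem_graded (hQ β α₀) (hP α₀ j₀)
        rw [GDaux.gadd_cancel] at h
        exact h
      have hz1 : ∀ γ δ, (fun γ => -(P α₀ j₀ * Q j₀ γ)) γ * (fun γ => -(P α₀ j₀ * Q j₀ γ)) δ = 0 := by
        intro γ δ
        show -(P α₀ j₀ * Q j₀ γ) * -(P α₀ j₀ * Q j₀ δ) = 0
        rw [neg_mul_neg]
        exact GDaux.cross_zero _ _ _ _ (hcomm _ _ _ _ (hP α₀ j₀) (hQ j₀ γ)) hpp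
      have hz2 : ∀ γ δ, (fun β => Q β α₀ * P α₀ j₀) γ * (fun β => Q β α₀ * P α₀ j₀) δ = 0 := by
        intro γ δ
        show (Q γ α₀ * P α₀ j₀) * (Q δ α₀ * P α₀ j₀) = 0
        exact GDaux.cross_zero' _ _ _ _ (hcomm _ _ _ _ (hQ δ α₀) (hP α₀ j₀)) hpp
      have hPQ : ∀ β γ, (P * Q) β γ = if β = α₀ then P α₀ j₀ * Q j₀ γ else 0 := by
        intro β γ
        rw [Matrix.mul_apply]
        by_cases hβ : β = α₀
        · subst hβ
          rw [if_pos rfl]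
          exact Finset.sum_eq_single j₀
            (fun j _ hj => by rw [hPz _ _ (Or.inr hj), zero_mul])
            (fun h => absurd (Finset.mem_univ _) h)
        · rw [if_neg hβ]
          exact Finset.sum_eq_zero (fun j _ => by rw [hPz _ _ (Or.inl hβ), zero_mul])
      have hQP : ∀ β k, (Q * P) β k = if k = j₀ then Q β α₀ * P α₀ j₀ else 0 := by
        intro β k
        rw [Matrix.mul_apply]
        by_cases hk : k = j₀
        · subst hk
          rw [if_pos rfl]
          exact Finset.sum_eq_single α₀
            (fun α _ hα => by rw [hPz _ _ (Or.inl hα), mul_zero])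
            (fun h => absurd (Finset.mem_univ _) h)
        · rw [if_neg hk]
          exact Finset.sum_eq_zero (fun α _ => by rw [hPz _ _ (Or.inr hk), mul_zero])
      have hX : 1 - P * Q = GDaux.Rrow α₀ (fun γ => -(P α₀ j₀ * Q j₀ γ)) := by
        ext β γ
        rw [Matrix.sub_apply, Matrix.one_apply, hPQ β γ]
        simp only [GDaux.Rrow, Matrix.of_apply]
        by_cases hβ : β = α₀ <;> simp [hβ, sub_eq_add_neg]
      have hY : 1 + Q * P = GDaux.Rcol j₀ (fun β => Q β α₀ * P α₀ j₀) := by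
        ext β k
        rw [Matrix.add_apply, Matrix.one_apply, hQP β k]
        simp only [GDaux.Rcol, Matrix.of_apply]
      rw [hX, hY]
      refine ⟨GDaux.Rrow_mdeg0 𝒜 u α₀ _ hdeg1, GDaux.Rcol_mdeg0 𝒜 v j₀ _ hdeg2, ?_⟩
      rw [GDaux.D_Rrow 𝒜 u lo Du hDu α₀ _ hdeg1 hz1,
        GDaux.D_Rcol 𝒜 v lo Dv hDv j₀ _ hdeg2 hz2]
      show 1 + -(P α₀ j₀ * Q j₀ α₀) = 1 + Q j₀ α₀ * P α₀ j₀
      rw [GDaux.anticomm hcomm (hP α₀ j₀) (hQ j₀ α₀) hodd2]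
  · by_cases hQ0 : Q = 0
    · have hPQ : P * Q = 0 := by rw [hQ0, Matrix.mul_zero]
      have hQP : Q * P = 0 := by rw [hQ0, Matrix.zero_mul]
      rw [hPQ, hQP, sub_zero, add_zero]
      exact ⟨(GDaux.D_one 𝒜 u lo Du hDu).1, (GDaux.D_one 𝒜 v lo Dv hDv).1,
        by rw [(GDaux.D_one 𝒜 u lo Du hDu).2, (GDaux.D_one 𝒜 v lo Dv hDv).2]⟩
    · obtain ⟨j₀, α₀, hq⟩ : ∃ j α, Q j α ≠ 0 := by
        by_contra h
        push_neg at h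
        exact hQ0 (by ext j α; exact h j α)
      have hQz : ∀ j α, j ≠ j₀ ∨ α ≠ α₀ → Q j α = 0 := by
        intro j α hne
        by_contra h
        obtain ⟨h1, h2⟩ := hQ' j α j₀ α₀ h hq
        rcases hne with hne | hne
        · exact hne h1
        · exact hne h2
      have hodd : gpair (u α₀ + v j₀) (u α₀ + v j₀) = 1 :=
        GDaux.gpair_mixed (hu α₀) (hv j₀)
      have hodd0 : gpair (v j₀ + u α₀) (v j₀ + u α₀) = 1 := by
        rw [add_comm (v j₀) (u α₀)]; exact hodd
      have hodd2 : gpair (u α₀ + v j₀) (v j₀ + u α₀) = 1 := by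
        rw [add_comm (v j₀) (u α₀)]; exact hodd
      have hqq : Q j₀ α₀ * Q j₀ α₀ = 0 := GDaux.sq_zero hcomm (hQ j₀ α₀) hodd0
      have hdeg1 : ∀ γ, -(P γ j₀ * Q j₀ α₀) ∈ 𝒜 (u γ + u α₀) := by
        intro γ
        have h := SetLike.mul_mem_graded (hP γ j₀) (hQ j₀ α₀)
        rw [GDaux.gadd_cancel] at h
        exact Submodule.neg_mem _ h
      have hdeg2 : ∀ k, Q j₀ α₀ * P α₀ k ∈ 𝒜 (v j₀ + v k) := by
        intro k
        have h := SetLike.mul_mem_graded (hQ j₀ α₀) (hP α₀ k)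
        rw [GDaux.gadd_cancel] at h
        exact h
      have hz1 : ∀ γ δ, (fun γ => -(P γ j₀ * Q j₀ α₀)) γ * (fun γ => -(P γ j₀ * Q j₀ α₀)) δ = 0 := by
        intro γ δ
        show -(P γ j₀ * Q j₀ α₀) * -(P δ j₀ * Q j₀ α₀) = 0
        rw [neg_mul_neg]
        exact GDaux.cross_zero' _ _ _ _ (hcomm _ _ _ _ (hP δ j₀) (hQ j₀ α₀)) hqq
      have hz2 : ∀ γ δ, (fun k => Q j₀ α₀ * P α₀ k) γ * (fun k => Q j₀ α₀ * P α₀ k) δ = 0 := by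
        intro γ δ
        show (Q j₀ α₀ * P α₀ γ) * (Q j₀ α₀ * P α₀ δ) = 0
        exact GDaux.cross_zero _ _ _ _ (hcomm _ _ _ _ (hQ j₀ α₀) (hP α₀ γ)) hqq
      have hPQ : ∀ β γ, (P * Q) β γ = if γ = α₀ then P β j₀ * Q j₀ α₀ else 0 := by
        intro β γ
        rw [Matrix.mul_apply]
        by_cases hγ : γ = α₀
        · subst hγ
          rw [if_pos rfl]
          exact Finset.sum_eq_single j₀
            (fun j _ hj => by rw [hQz _ _ (Or.inl hj), mul_zero])
            (fun h => absurd (Finset.mem_univ _) h)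
        · rw [if_neg hγ]
          exact Finset.sum_eq_zero (fun j _ => by rw [hQz _ _ (Or.inr hγ), mul_zero])
      have hQP : ∀ β k, (Q * P) β k = if β = j₀ then Q j₀ α₀ * P α₀ k else 0 := by
        intro β k
        rw [Matrix.mul_apply]
        by_cases hβ : β = j₀
        · subst hβ
          rw [if_pos rfl]
          exact Finset.sum_eq_single α₀
            (fun α _ hα => by rw [hQz _ _ (Or.inr hα), zero_mul])
            (fun h => absurd (Finset.mem_univ _) h)
        · rw [if_neg hβ]
          exact Finset.sum_eq_zero (fun α _ => by rw [hQz _ _ (Or.inl hβ), zero_mul])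
      have hX : 1 - P * Q = GDaux.Rcol α₀ (fun γ => -(P γ j₀ * Q j₀ α₀)) := by
        ext β γ
        rw [Matrix.sub_apply, Matrix.one_apply, hPQ β γ]
        simp only [GDaux.Rcol, Matrix.of_apply]
        by_cases hγ : γ = α₀ <;> simp [hγ, sub_eq_add_neg]
      have hY : 1 + Q * P = GDaux.Rrow j₀ (fun k => Q j₀ α₀ * P α₀ k) := by
        ext β k
        rw [Matrix.add_apply, Matrix.one_apply, hQP β k]
        simp only [GDaux.Rrow, Matrix.of_apply]
      rw [hX, hY]
      refine ⟨GDaux.Rcol_mdeg0 𝒜 u α₀ _ hdeg1, GDaux.Rrow_mdeg0 𝒜 v j₀ _ hdeg2, ?_⟩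
      rw [GDaux.D_Rcol 𝒜 u lo Du hDu α₀ _ hdeg1 hz1,
        GDaux.D_Rrow 𝒜 v lo Dv hDv j₀ _ hdeg2 hz2]
      show 1 + -(P α₀ j₀ * Q j₀ α₀) = 1 + Q j₀ α₀ * P α₀ j₀
      rw [GDaux.anticomm hcomm (hP α₀ j₀) (hQ j₀ α₀) hodd2]
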